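/- Let M ∈ GLₙ(ℤ). Then for all positive integers o and ν there exist primes p₁ ≠ p₂ with pᵢ ≡ 1 mod o and pᵢ ≥ ν for i = 1, 2, such that, setting s := p₁p₂ and r := s·|GLₙ(ℤ/s)|, every cyclic subgroup C of (ℤ/s)ⁿ ⋊_{M_s} ℤ/r satisfies at least one of: (a) C ∩ (ℤ/s)ⁿ = {0}; (b) there is i ∈ {1, 2} such that pᵢ divides both the order of C and the index [ℤ/r : pr_{r,s}(C)]. In other words, every M ∈ GLₙ(ℤ) is cyclic-good. -/

import Mathlib

open Multiplicative

/-- The homomorphism `ℤ/r → G` sending the generator `1` of `ℤ/r` to a given element `g`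
satisfying `g ^ r = 1` (and the trivial homomorphism if `g ^ r ≠ 1`). -/
noncomputable def zmodPowHom {G : Type*} [Group G] (r : ℕ) (g : G) :
    Multiplicative (ZMod r) →* G := by
  classical
  exact if h : g ^ (r : ℕ) = 1 then
    AddMonoidHom.toMultiplicativeLeft
      (ZMod.lift r ⟨(zmultiplesHom (Additive G)) (Additive.ofMul g), by
        show ((r : ℕ) : ℤ) • Additive.ofMul g = 0
        rw [← ofMul_zpow, zpow_natCast, h]; rfl⟩)
  else 1

/-- The reduction `M_s ∈ GLₙ(ℤ/s)` of a matrix `M ∈ GLₙ(ℤ)` modulo `s`. -/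
def glReduction (n s : ℕ) (M : GL (Fin n) ℤ) : GL (Fin n) (ZMod s) :=
  Matrix.GeneralLinearGroup.map (Int.castRingHom (ZMod s)) M

/-- The automorphism of `(ℤ/s)ⁿ` (written multiplicatively) given by the matrix
`M_s ∈ GLₙ(ℤ/s)`. -/
def glAut (n s : ℕ) (M : GL (Fin n) ℤ) : MulAut (Multiplicative (Fin n → ZMod s)) :=
  AddEquiv.toMultiplicative
    (((LinearMap.GeneralLinearGroup.generalLinearEquiv (ZMod s) (Fin n → ZMod s))
        (Matrix.GeneralLinearGroup.toLin (glReduction n s M))).toAddEquiv)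

/-- The action of `ℤ/r` on `(ℤ/s)ⁿ` in which the fixed generator `1` of `ℤ/r` acts by the
reduction `M_s` of `M` modulo `s` (assuming the order of `M_s` divides `r`). -/
noncomputable def glTwist (n s r : ℕ) (M : GL (Fin n) ℤ) :
    Multiplicative (ZMod r) →* MulAut (Multiplicative (Fin n → ZMod s)) :=
  zmodPowHom r (glAut n s M)

/-- The semidirect product `(ℤ/s)ⁿ ⋊_{M_s} ℤ/r`. -/
noncomputable def MatSdp (n s r : ℕ) (M : GL (Fin n) ℤ) : Type :=
  Multiplicative (Fin n → ZMod s) ⋊[glTwist n s r M] Multiplicative (ZMod r)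

noncomputable instance (n s r : ℕ) (M : GL (Fin n) ℤ) : Group (MatSdp n s r M) :=
  inferInstanceAs (Group (Multiplicative (Fin n → ZMod s) ⋊[glTwist n s r M]
    Multiplicative (ZMod r)))

/-- The copy of `(ℤ/s)ⁿ` inside `(ℤ/s)ⁿ ⋊_{M_s} ℤ/r`. -/
noncomputable def MatSdp.A (n s r : ℕ) (M : GL (Fin n) ℤ) : Subgroup (MatSdp n s r M) :=
  (SemidirectProduct.inl (φ := glTwist n s r M)).range

/-- The element of `(ℤ/s)ⁿ ⋊_{M_s} ℤ/r` given by `v ∈ (ℤ/s)ⁿ`. -/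
noncomputable def MatSdp.inlV (n s r : ℕ) (M : GL (Fin n) ℤ) (v : Fin n → ZMod s) :
    MatSdp n s r M :=
  SemidirectProduct.inl (ofAdd v)

/-- The canonical projection `pr_{r,s} : (ℤ/s)ⁿ ⋊_{M_s} ℤ/r → ℤ/r`. -/
noncomputable def MatSdp.pr (n s r : ℕ) (M : GL (Fin n) ℤ) :
    MatSdp n s r M →* Multiplicative (ZMod r) :=
  SemidirectProduct.rightHom

/-- The fixed generator `t` of `ℤ/r` inside `(ℤ/s)ⁿ ⋊_{M_s} ℤ/r`. -/
noncomputable def MatSdp.t (n s r : ℕ) (M : GL (Fin n) ℤ) : MatSdp n s r M :=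
  SemidirectProduct.inr (ofAdd (1 : ZMod r))

/-- A (finite) group `H` is *`p`-hyperelementary* for a prime `p` if there is a short exact
sequence `1 → C → H → P → 1` with `C` a normal cyclic subgroup of order prime to `p` and
`P = H/C` a `p`-group (the latter condition being expressed by saying that every element of
`H` has a `p`-power power lying in `C`);  `H` is *hyperelementary* if it is
`p`-hyperelementary for some prime `p`. -/
def IsHyperelementary (H : Type*) [Group H] : Prop :=
  ∃ p : ℕ, p.Prime ∧
    ∃ C : Subgroup H, C.Normal ∧ IsCyclic C ∧ Nat.Coprime (Nat.card C) p ∧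
      ∀ h : H, ∃ m : ℕ, h ^ (p ^ m) ∈ C

/-- `M ∈ GLₙ(ℤ)` is *cyclic-good* if for all positive integers `o` and `ν` there are primes
`p₁ ≠ p₂` with `pᵢ ≡ 1 mod o` and `pᵢ ≥ ν`, such that, setting `s := p₁p₂` and
`r := s·|GLₙ(ℤ/s)|`, every cyclic subgroup `C` of `(ℤ/s)ⁿ ⋊_{M_s} ℤ/r` satisfies
(a) `C ∩ (ℤ/s)ⁿ = {0}`, or (b) there is `i ∈ {1,2}` such that `pᵢ` divides both `|C|` and
`[ℤ/r : pr_{r,s}(C)]`. -/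
noncomputable def CyclicGood (n : ℕ) (M : GL (Fin n) ℤ) : Prop :=
  ∀ o ν : ℕ, 0 < o → 0 < ν →
    ∃ p₁ p₂ : ℕ, p₁.Prime ∧ p₂.Prime ∧ p₁ ≠ p₂ ∧
      p₁ ≡ 1 [MOD o] ∧ p₂ ≡ 1 [MOD o] ∧ ν ≤ p₁ ∧ ν ≤ p₂ ∧
      ∀ C : Subgroup (MatSdp n (p₁ * p₂)
          (p₁ * p₂ * Nat.card (GL (Fin n) (ZMod (p₁ * p₂)))) M),
        IsCyclic C →
          C ⊓ MatSdp.A n (p₁ * p₂) (p₁ * p₂ * Nat.card (GL (Fin n) (ZMod (p₁ * p₂)))) M = ⊥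
          ∨ (p₁ ∣ Nat.card C ∧
              p₁ ∣ (Subgroup.map (MatSdp.pr n (p₁ * p₂)
                (p₁ * p₂ * Nat.card (GL (Fin n) (ZMod (p₁ * p₂)))) M) C).index)
          ∨ (p₂ ∣ Nat.card C ∧
              p₂ ∣ (Subgroup.map (MatSdp.pr n (p₁ * p₂)
                (p₁ * p₂ * Nat.card (GL (Fin n) (ZMod (p₁ * p₂)))) M) C).index)

/-- `M ∈ GLₙ(ℤ)` is *hyper-good* if for all positive integers `o` and `ν` there are natural
numbers `s` and `r` such that `s ≡ 1 mod o`, the order of `GLₙ(ℤ/s)` divides `r`, and every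
hyperelementary subgroup `H` of `(ℤ/s)ⁿ ⋊_{M_s} ℤ/r` satisfies at least one of:
(a) there is a natural number `k` dividing `s` with `k ≡ 1 mod o`, `k ≥ ν` and
`H ∩ (ℤ/s)ⁿ ⊆ k·(ℤ/s)ⁿ`;  (b) `[ℤ/r : pr_{r,s}(H)] ≥ ν`. -/
noncomputable def HyperGood (n : ℕ) (M : GL (Fin n) ℤ) : Prop :=
  ∀ o ν : ℕ, 0 < o → 0 < ν →
    ∃ s r : ℕ, s ≡ 1 [MOD o] ∧ Nat.card (GL (Fin n) (ZMod s)) ∣ r ∧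
      ∀ H : Subgroup (MatSdp n s r M), IsHyperelementary H →
        (∃ k : ℕ, k ∣ s ∧ k ≡ 1 [MOD o] ∧ ν ≤ k ∧
            ∀ v : Fin n → ZMod s, MatSdp.inlV n s r M v ∈ H →
              ∃ w : Fin n → ZMod s, v = k • w)
        ∨ ν ≤ (Subgroup.map (MatSdp.pr n s r M) H).index


section AuxiliaryLemmas

private lemma sdp_pow_right' {N G : Type*} [Group N] [Group G] {φ : G →* MulAut N}
    (g : N ⋊[φ] G) (k : ℕ) : (g ^ k).right = g.right ^ k := by
  induction k with
  | zero => simp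
  | succ k ih => rw [pow_succ, pow_succ, SemidirectProduct.mul_right, ih]

private lemma sdp_pow_left' {N G : Type*} [CommGroup N] [Group G] {φ : G →* MulAut N}
    (g : N ⋊[φ] G) (k : ℕ) :
    (g ^ k).left = ∏ j ∈ Finset.range k, φ (g.right ^ j) g.left := by
  induction k with
  | zero => simp
  | succ k ih =>
    rw [pow_succ, SemidirectProduct.mul_left, ih, sdp_pow_right', Finset.prod_range_succ]

private lemma prod_range_mul_of_periodic' {N : Type*} [CommMonoid N] (f : ℕ → N) (m K : ℕ)
    (hf : ∀ j, f (j + m) = f j) :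
    ∏ j ∈ Finset.range (m * K), f j = (∏ j ∈ Finset.range m, f j) ^ K := by
  have hf' : ∀ t j, f (j + m * t) = f j := by
    intro t
    induction t with
    | zero => simp
    | succ t ih => intro j; rw [mul_add, mul_one, ← add_assoc, hf, ih]
  induction K with
  | zero => simp
  | succ K ih =>
    rw [mul_add, mul_one, Finset.prod_range_add, ih, pow_succ]
    congr 1
    refine Finset.prod_congr rfl fun j _ => ?_
    rw [add_comm (m * K) j, hf']

private lemma glAut_pow_apply' (n s : ℕ) (M : GL (Fin n) ℤ) (k : ℕ) (w : Fin n → ZMod s) :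
    (glAut n s M ^ k) (ofAdd w)
      = ofAdd (Matrix.mulVec (Units.val (glReduction n s M) ^ k) w) := by
  induction k with
  | zero => simp [Matrix.one_mulVec]
  | succ k ih =>
    rw [pow_succ', MulAut.mul_apply, ih]
    show ofAdd (Matrix.mulVec (Units.val (glReduction n s M)) _) = _
    simp only [toAdd_ofAdd]
    rw [Matrix.mulVec_mulVec, ← pow_succ']

private lemma glAut_pow_card' (n s : ℕ) [NeZero s] (M : GL (Fin n) ℤ) :
    glAut n s M ^ Nat.card (GL (Fin n) (ZMod s)) = 1 := by
  have h1 : glReduction n s M ^ Nat.card (GL (Fin n) (ZMod s)) = 1 := pow_card_eq_one'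
  ext x
  conv_lhs => rw [← ofAdd_toAdd x, glAut_pow_apply', ← Units.val_pow_eq_pow_val, h1]
  simp [Matrix.one_mulVec]

private lemma glTwist_apply' (n s r : ℕ) [NeZero r] (M : GL (Fin n) ℤ)
    (h1 : glAut n s M ^ (r : ℕ) = 1) (y : Multiplicative (ZMod r)) :
    glTwist n s r M y = glAut n s M ^ (y.toAdd).val := by
  rw [glTwist, zmodPowHom, dif_pos h1]
  have h2 : (((y.toAdd).val : ℤ) : ZMod r) = y.toAdd := by
    push_cast
    simp [ZMod.natCast_val, ZMod.cast_id]
  simp only [AddMonoidHom.coe_toMultiplicativeLeft, Function.comp_apply]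
  conv_lhs => rw [← h2, ZMod.lift_coe]
  simp only [zmultiplesHom_apply, ← ofMul_zpow, toMul_ofMul, zpow_natCast]

private lemma multiplicative_pow_s' (s : ℕ) {n : ℕ} (y : Multiplicative (Fin n → ZMod s)) :
    y ^ s = 1 := by
  rw [← ofAdd_toAdd y, ← ofAdd_nsmul, ofAdd_eq_one]
  funext i
  show s • (y.toAdd i) = 0
  rw [nsmul_eq_mul, ZMod.natCast_self, zero_mul]

private lemma goodPrime' {n : ℕ} (M : GL (Fin n) ℤ) {p q s r : ℕ}
    (hp : p.Prime) (hq : q.Prime) (hne : p ≠ q) (hs : s = p * q ∨ s = q * p)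
    (hrr : r = s * Nat.card (GL (Fin n) (ZMod s)))
    (C : Subgroup (MatSdp n s r M)) (hC : IsCyclic C)
    {w : MatSdp n s r M} (hwC : w ∈ C) (hwA : w ∈ MatSdp.A n s r M)
    (hpw : p ∣ orderOf w) :
    p ∣ Nat.card C ∧ p ∣ (Subgroup.map (MatSdp.pr n s r M) C).index := by
  have hs0 : s ≠ 0 := by
    rcases hs with h | h
    · rw [h]; exact Nat.mul_ne_zero hp.pos.ne' hq.pos.ne'
    · rw [h]; exact Nat.mul_ne_zero hq.pos.ne' hp.pos.ne'
  haveI : NeZero s := ⟨hs0⟩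
  have hc0 : Nat.card (GL (Fin n) (ZMod s)) ≠ 0 := by
    haveI : Nonempty (GL (Fin n) (ZMod s)) := One.instNonempty
    exact Nat.card_pos.ne'
  have hr0 : r ≠ 0 := by rw [hrr]; exact mul_ne_zero hs0 hc0
  haveI : NeZero r := ⟨hr0⟩
  haveI hfin : Finite (MatSdp n s r M) := by
    have : Finite (Multiplicative (Fin n → ZMod s) ⋊[glTwist n s r M]
        Multiplicative (ZMod r)) :=
      Finite.of_injective (fun x => (x.left, x.right)) fun a b h =>
        SemidirectProduct.ext (congrArg Prod.fst h) (congrArg Prod.snd h)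
    exact this
  refine ⟨hpw.trans (Subgroup.orderOf_dvd_natCard C hwC), ?_⟩
  by_contra hcon
  obtain ⟨⟨g, hgC⟩, hgen⟩ := hC.exists_generator
  have hwz : w ∈ Subgroup.zpowers g := by
    obtain ⟨z, hz⟩ := Subgroup.mem_zpowers_iff.mp (hgen ⟨w, hwC⟩)
    exact Subgroup.mem_zpowers_iff.mpr ⟨z, by simpa using congrArg Subtype.val hz⟩
  obtain ⟨e, he⟩ := (Submonoid.mem_powers_iff w g).mp
    ((isOfFinOrder_of_finite g).mem_powers_iff_mem_zpowers.mpr hwz)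
  set x : Multiplicative (ZMod r) := MatSdp.pr n s r M g with hxdef
  have hprw : MatSdp.pr n s r M w = 1 := by
    obtain ⟨u, hu⟩ := hwA
    rw [← hu]
    show SemidirectProduct.rightHom (SemidirectProduct.inl u) = 1
    simp
  have hde : orderOf x ∣ e :=
    orderOf_dvd_of_pow_eq_one (by rw [hxdef, ← map_pow, he, hprw])
  have hPz : Subgroup.map (MatSdp.pr n s r M) C = Subgroup.zpowers x := by
    apply le_antisymm
    · rintro y ⟨v, hvC, rfl⟩
      obtain ⟨z, hz⟩ := Subgroup.mem_zpowers_iff.mp (hgen ⟨v, hvC⟩)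
      have hgv : g ^ z = v := by simpa using congrArg Subtype.val hz
      exact Subgroup.mem_zpowers_iff.mpr ⟨z, by rw [hxdef, ← map_zpow, hgv]⟩
    · rw [Subgroup.zpowers_le]
      exact ⟨g, hgC, rfl⟩
  have hcard : orderOf x * (Subgroup.map (MatSdp.pr n s r M) C).index = r := by
    have h1 := Subgroup.card_mul_index (Subgroup.zpowers x)
    rw [Nat.card_zpowers] at h1
    rw [hPz, h1, Nat.card_congr Multiplicative.toAdd, Nat.card_zmod]
  have hrc : glAut n s M ^ (r : ℕ) = 1 := by
    rw [hrr, mul_comm, pow_mul, glAut_pow_card', one_pow]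
  set α := glTwist n s r M x with hα
  set d := orderOf x with hddef
  set m := orderOf α with hmdef
  have hαd : α ^ d = 1 := by rw [hα, ← map_pow, hddef, pow_orderOf_eq_one, map_one]
  have hmd : m ∣ d := orderOf_dvd_of_pow_eq_one hαd
  have hαc : α ^ Nat.card (GL (Fin n) (ZMod s)) = 1 := by
    rw [hα, glTwist_apply' n s r M hrc, ← pow_mul, mul_comm, pow_mul, glAut_pow_card', one_pow]
  have hmc : m ∣ Nat.card (GL (Fin n) (ZMod s)) := orderOf_dvd_of_pow_eq_one hαc
  have hd0 : d ≠ 0 := (orderOf_pos x).ne'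
  have hm0 : m ≠ 0 := fun h0 => hd0 (by rwa [h0, zero_dvd_iff] at hmd)
  have hps : p ∣ s := by
    rcases hs with h | h
    · exact h ▸ Dvd.intro q rfl
    · exact h ▸ Dvd.intro_left q rfl
  have hpt_c : p ^ (m.factorization p) ∣ Nat.card (GL (Fin n) (ZMod s)) :=
    (Nat.ordProj_dvd m p).trans hmc
  have hpt1_r : p ^ (m.factorization p + 1) ∣ r := by
    calc p ^ (m.factorization p + 1) = p * p ^ (m.factorization p) := by
          rw [pow_succ, mul_comm]
      _ ∣ p * Nat.card (GL (Fin n) (ZMod s)) := mul_dvd_mul_left p hpt_c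
      _ ∣ r := by rw [hrr]; exact mul_dvd_mul hps dvd_rfl
  have hcop : (p ^ (m.factorization p + 1)).Coprime
      ((Subgroup.map (MatSdp.pr n s r M) C).index) :=
    Nat.Coprime.pow_left _ ((hp.coprime_iff_not_dvd).mpr hcon)
  have hptd : p ^ (m.factorization p + 1) ∣ d :=
    hcop.dvd_of_dvd_mul_right (by rw [hcard]; exact hpt1_r)
  have hpm_d : p * m ∣ d := by
    have h2 : p * m = p ^ (m.factorization p + 1) * (m / p ^ (m.factorization p)) := by
      conv_lhs => rw [← Nat.ordProj_mul_ordCompl_eq_self m p]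
      rw [pow_succ]
      ring
    rw [h2]
    exact (Nat.Coprime.pow_left _
      ((hp.coprime_iff_not_dvd).mpr (Nat.not_dvd_ordCompl hp hm0))).mul_dvd_of_dvd_of_dvd
      hptd ((Nat.ordCompl_dvd m p).trans hmd)
  obtain ⟨k, hk⟩ := hpm_d.trans hde
  have hsdvd : s ∣ p * k * q := by
    rcases hs with h | h
    · exact h ▸ ⟨k, by ring⟩
    · exact h ▸ ⟨k, by ring⟩
  obtain ⟨k', hk'⟩ := hsdvd
  have hm1 : α ^ m = 1 := by rw [hmdef]; exact pow_orderOf_eq_one α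
  have hgr : g.right = x := rfl
  have hwq : w ^ q = 1 := by
    rw [← he, ← pow_mul]
    have hEq : e * q = m * (p * k * q) := by rw [hk]; ring
    apply SemidirectProduct.ext
    · erw [sdp_pow_left', hEq]
      simp only [hgr]
      rw [prod_range_mul_of_periodic' (fun j => (glTwist n s r M) (x ^ j) g.left) m (p * k * q)
        (fun j => ?_)]
      · rw [hk', pow_mul, multiplicative_pow_s', one_pow]
        rfl
      · show (glTwist n s r M) (x ^ (j + m)) g.left = (glTwist n s r M) (x ^ j) g.left
        rw [pow_add, map_mul, map_pow, ← hα, map_pow, ← hα, hm1, mul_one]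
    · erw [sdp_pow_right']
      simp only [hgr]
      show x ^ (e * q) = 1
      exact orderOf_dvd_iff_pow_eq_one.mp (hde.mul_right q)
  have how : orderOf w ∣ q := orderOf_dvd_of_pow_eq_one hwq
  exact (hne ((Nat.prime_dvd_prime_iff_eq hp hq).mp (hpw.trans how))).elim

end AuxiliaryLemmas

/-- Every `M ∈ GLₙ(ℤ)` is cyclic-good. -/
theorem all_glZ_cyclicGood (n : ℕ) (M : GL (Fin n) ℤ) : CyclicGood n M := by
  intro o nu ho hnu
  obtain ⟨p₁, hp₁, hgt₁, hmod₁⟩ := Nat.exists_prime_gt_modEq_one nu ho.ne'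
  obtain ⟨p₂, hp₂, hgt₂, hmod₂⟩ := Nat.exists_prime_gt_modEq_one (max nu p₁) ho.ne'
  have hp2big : p₁ < p₂ := lt_of_le_of_lt (le_max_right _ _) hgt₂
  have hne : p₁ ≠ p₂ := hp2big.ne
  refine ⟨p₁, p₂, hp₁, hp₂, hne, hmod₁, hmod₂, hgt₁.le,
    le_trans (le_max_left _ _) hgt₂.le, ?_⟩
  intro C hC
  by_cases hbot : C ⊓ MatSdp.A n (p₁ * p₂)
      (p₁ * p₂ * Nat.card (GL (Fin n) (ZMod (p₁ * p₂)))) M = ⊥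
  · exact Or.inl hbot
  right
  obtain ⟨a, ha⟩ := Subgroup.ne_bot_iff_exists_ne_one.mp hbot
  have haC : (a : MatSdp n (p₁ * p₂)
      (p₁ * p₂ * Nat.card (GL (Fin n) (ZMod (p₁ * p₂)))) M) ∈ C := (Subgroup.mem_inf.mp a.2).1
  have haA : (a : MatSdp n (p₁ * p₂)
      (p₁ * p₂ * Nat.card (GL (Fin n) (ZMod (p₁ * p₂)))) M) ∈ MatSdp.A n (p₁ * p₂)
      (p₁ * p₂ * Nat.card (GL (Fin n) (ZMod (p₁ * p₂)))) M := (Subgroup.mem_inf.mp a.2).2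
  have ha1 : (a : MatSdp n (p₁ * p₂)
      (p₁ * p₂ * Nat.card (GL (Fin n) (ZMod (p₁ * p₂)))) M) ≠ 1 := by
    intro h
    exact ha (Subtype.ext h)
  have hos : orderOf (a : MatSdp n (p₁ * p₂)
      (p₁ * p₂ * Nat.card (GL (Fin n) (ZMod (p₁ * p₂)))) M) ∣ p₁ * p₂ := by
    obtain ⟨u, hu⟩ := haA
    erw [← hu, orderOf_injective _ SemidirectProduct.inl_injective u]
    exact orderOf_dvd_of_pow_eq_one (multiplicative_pow_s' (p₁ * p₂) u)
  have hps : p₁ ∣ orderOf (a : MatSdp n (p₁ * p₂)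
        (p₁ * p₂ * Nat.card (GL (Fin n) (ZMod (p₁ * p₂)))) M)
      ∨ p₂ ∣ orderOf (a : MatSdp n (p₁ * p₂)
        (p₁ * p₂ * Nat.card (GL (Fin n) (ZMod (p₁ * p₂)))) M) := by
    by_contra hcon2
    push_neg at hcon2
    have hcop : (orderOf (a : MatSdp n (p₁ * p₂)
        (p₁ * p₂ * Nat.card (GL (Fin n) (ZMod (p₁ * p₂)))) M)).Coprime (p₁ * p₂) :=
      Nat.Coprime.mul_right ((hp₁.coprime_iff_not_dvd.mpr hcon2.1).symm)
        ((hp₂.coprime_iff_not_dvd.mpr hcon2.2).symm)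
    exact ha1 (orderOf_eq_one_iff.mp (Nat.Coprime.eq_one_of_dvd hcop hos))
  rcases hps with h | h
  · exact Or.inl (goodPrime' M hp₁ hp₂ hne (Or.inl rfl) rfl C hC haC haA h)
  · exact Or.inr (goodPrime' M hp₂ hp₁ hne.symm (Or.inr rfl) rfl C hC haC haA h)
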